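/- arXiv:0712.3416 — 4 statements merged into one kernel-verified Lean document; each statement's English description precedes it below -/
import Mathlib

section
/- (Garsia–Rodemich–Rumsey inequality.) Let p and Ψ be strictly increasing continuous functions from [0,∞) to [0,∞) with p(0)=Ψ(0)=0 and Ψ(t)→∞ as t→∞, and let Ψ⁻¹ denote the inverse function of Ψ. Let T>0, let g:[0,T]→ℝ^d be continuous, and let B∈(0,∞) be such that the double integral over {(s,t)∈[0,T]²: s≠t} of Ψ(|g(t)−g(s)|/p(|t−s|)) with respect to Lebesgue measure ds dt is at most B. Then for all 0 ≤ s ≤ t ≤ T one has |g(t)−g(s)| ≤ 8·∫_{(0,t−s]} Ψ⁻¹(4B/u²) dμ_p(u), where μ_p denotes the Lebesgue–Stieltjes measure associated with the nondecreasing continuous function p (the right-hand side being interpreted in [0,∞], so the inequality is trivially true when that integral is infinite). -/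
open MeasureTheory Set Filter

private lemma two_mul_div_two (a : ENNReal) : 2 * a / 2 = a := by
  rw [mul_comm, mul_div_assoc, ENNReal.div_self (by norm_num) (by norm_num), mul_one]

private lemma markov_strict {f : ℝ → ENNReal} (hf : Measurable f) {S : Set ℝ}
    (hS : MeasurableSet S) (h0 : volume S ≠ 0) (hT : volume S ≠ ⊤) {c : ENNReal} (hc : c ≠ ⊤)
    (hint : ∫⁻ x in S, f x ≤ c * volume S / 2) :
    volume (S ∩ {x | c < f x}) < volume S / 2 := by
  set A := S ∩ {x | c < f x} with hAdef
  have hA : MeasurableSet A := hS.inter (hf measurableSet_Ioi)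
  have half_pos : 0 < volume S / 2 := ENNReal.div_pos h0 (by norm_num)
  have half_ne_top : volume S / 2 ≠ ⊤ :=
    (ENNReal.div_lt_top hT (by norm_num)).ne
  have hASub : A ⊆ S := inter_subset_left
  have le1 : c * volume A ≤ ∫⁻ x in A, f x := by
    rw [← setLIntegral_const]
    exact setLIntegral_mono' hA (fun x hx => (hx.2 : c < f x).le
      )
  have le2 : ∫⁻ x in A, f x ≤ c * volume S / 2 :=
    le_trans (lintegral_mono_set hASub) hint
  by_contra hcon
  push_neg at hcon
  rcases eq_or_ne c 0 with hc0 | hc0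
  · -- c = 0 : integral is zero, so f = 0 a.e. on S, but f > 0 on A
    have hzero : ∫⁻ x in S, f x = 0 := by
      refine le_antisymm ?_ zero_le
      simpa [hc0] using hint
    have hae : f =ᶠ[ae (volume.restrict S)] 0 := (lintegral_eq_zero_iff hf).mp hzero
    have hAnull : volume A = 0 := by
      have : (volume.restrict S) {x | f x ≠ 0} = 0 := hae
      have hsub : A ⊆ {x | f x ≠ 0} := by
        intro x hx
        have : c < f x := hx.2
        simp only [mem_setOf_eq]
        exact fun h => by simp [hc0, h] at this
      refine le_antisymm ?_ zero_le
      calc volume A = (volume.restrict S) A := by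
            rw [Measure.restrict_apply hA, inter_eq_self_of_subset_left hASub]
        _ ≤ (volume.restrict S) {x | f x ≠ 0} := measure_mono hsub
        _ = 0 := this
    rw [hAnull] at hcon
    exact absurd hcon (not_le.mpr half_pos)
  · -- c ≠ 0
    have hcancel : volume A ≤ volume S / 2 := by
      have := le_trans le1 le2
      rw [mul_div_assoc] at this
      exact (ENNReal.mul_le_mul_iff_right hc0 hc).mp this
    have hAeq : volume A = volume S / 2 := le_antisymm hcancel hcon
    have hfin : c * volume A ≠ ⊤ := by
      rw [hAeq]
      exact ENNReal.mul_ne_top hc half_ne_top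
    have hIeq : ∫⁻ x in A, f x = c * volume A := by
      refine le_antisymm ?_ le1
      rw [hAeq, ← mul_div_assoc]
      exact le2
    have hsplit : ∫⁻ x in A, f x = c * volume A + ∫⁻ x in A, (f x - c) := by
      calc ∫⁻ x in A, f x = ∫⁻ x in A, (c + (f x - c)) := by
            refine setLIntegral_congr_fun hA (fun x hx => ?_)
            exact (add_tsub_cancel_of_le (hx.2 : c < f x).le).symm
        _ = c * volume A + ∫⁻ x in A, (f x - c) := by
            rw [lintegral_add_left measurable_const, setLIntegral_const]
    have hrem : ∫⁻ x in A, (f x - c) = 0 := by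
      have : c * volume A + ∫⁻ x in A, (f x - c) = c * volume A + 0 := by
        rw [add_zero, ← hsplit, hIeq]
      exact (ENNReal.add_right_inj hfin).mp this
    have hae : (fun x => f x - c) =ᶠ[ae (volume.restrict A)] 0 :=
      (lintegral_eq_zero_iff (hf.sub measurable_const)).mp hrem
    have hAnull : volume A = 0 := by
      have h1 : (volume.restrict A) {x | f x - c ≠ 0} = 0 := hae
      have hsub : A ⊆ {x | f x - c ≠ 0} := by
        intro x hx
        exact (tsub_pos_iff_lt.mpr (hx.2 : c < f x)).ne'
      refine le_antisymm ?_ zero_le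
      calc volume A = (volume.restrict A) A := by
            rw [Measure.restrict_apply hA, inter_self]
        _ ≤ (volume.restrict A) {x | f x - c ≠ 0} := measure_mono hsub
        _ = 0 := h1
    rw [hAnull] at hAeq
    exact absurd hAeq.symm (ne_of_gt half_pos)

private lemma select {f h : ℝ → ENNReal} (hf : Measurable f) (hh : Measurable h) {S : Set ℝ}
    (hS : MeasurableSet S) (h0 : volume S ≠ 0) (hT : volume S ≠ ⊤) {cf ch : ENNReal}
    (hcf : cf ≠ ⊤) (hch : ch ≠ ⊤)
    (hif : ∫⁻ x in S, f x ≤ cf * volume S / 2) (hih : ∫⁻ x in S, h x ≤ ch * volume S / 2) :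
    ∃ y ∈ S, f y ≤ cf ∧ h y ≤ ch := by
  have m1 := markov_strict hf hS h0 hT hcf hif
  have m2 := markov_strict hh hS h0 hT hch hih
  by_contra hcon
  push_neg at hcon
  have hsub : S ⊆ (S ∩ {x | cf < f x}) ∪ (S ∩ {x | ch < h x}) := by
    intro x hx
    by_cases hl : f x ≤ cf
    · exact Or.inr ⟨hx, hcon x hx hl⟩
    · exact Or.inl ⟨hx, not_le.mp hl⟩
  have : volume S < volume S := by
    calc volume S ≤ volume ((S ∩ {x | cf < f x}) ∪ (S ∩ {x | ch < h x})) := measure_mono hsub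
      _ ≤ volume (S ∩ {x | cf < f x}) + volume (S ∩ {x | ch < h x}) := measure_union_le _ _
      _ < volume S / 2 + volume S / 2 := ENNReal.add_lt_add m1 m2
      _ = volume S := ENNReal.add_halves _
  exact lt_irrefl _ this


private lemma exists_seq {α : Type*} {G : α → Prop} {R : α → α → Prop} (a₀ : α) (h0 : G a₀)
    (hstep : ∀ a, G a → ∃ b, G b ∧ R a b) :
    ∃ u : ℕ → α, u 0 = a₀ ∧ (∀ n, G (u n)) ∧ ∀ n, R (u n) (u (n + 1)) := by
  let f : {a // G a} → {a // G a} := fun x => ⟨(hstep x.1 x.2).choose, (hstep x.1 x.2).choose_spec.1⟩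
  let v : ℕ → {a // G a} := fun n => f^[n] ⟨a₀, h0⟩
  refine ⟨fun n => (v n).1, rfl, fun n => (v n).2, fun n => ?_⟩
  have hsucc : v (n + 1) = f (v n) := Function.iterate_succ_apply' f n _
  show R (v n).1 (v (n+1)).1
  rw [hsucc]
  exact (hstep (v n).1 (v n).2).choose_spec.2

section half
variable {d : ℕ}

private lemma grr_half (p : StieltjesFunction ℝ) (hp_cont : Continuous p)
    (hp_mono : StrictMonoOn p (Ici 0)) (hp0 : p 0 = 0)
    (Ψ Ψinv : ℝ → ℝ) (hΨc : Continuous Ψ) (hΨm : StrictMonoOn Ψ (Ici 0)) (hΨ0 : Ψ 0 = 0)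
    (hinv0 : ∀ y, 0 ≤ y → 0 ≤ Ψinv y) (hinvl : ∀ x, 0 ≤ x → Ψinv (Ψ x) = x)
    (hinvr : ∀ y, 0 ≤ y → Ψ (Ψinv y) = y)
    (g : ℝ → EuclideanSpace ℝ (Fin d)) (hg : Continuous g)
    (a b : ℝ) (hab : a < b) (B : ℝ) (hB : 0 < B)
    (hIb : ∫⁻ x in Icc a b, ∫⁻ y in Icc a b,
        ENNReal.ofReal (Ψ (‖g y - g x‖ / p |y - x|)) ≤ ENNReal.ofReal B)
    (c : ℝ) (hc : c ∈ Ioc a b)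
    (hIc : ∫⁻ y in Icc a b, ENNReal.ofReal (Ψ (‖g y - g c‖ / p |y - c|)) ≤
      ENNReal.ofReal (2 * B / (b - a))) :
    ENNReal.ofReal (dist (g c) (g a)) ≤
      4 * ∫⁻ u in Ioc 0 (b - a), ENNReal.ofReal (Ψinv (4 * B / u ^ 2)) ∂p.measure := by
  set I : ℝ → ENNReal :=
    fun x => ∫⁻ y in Icc a b, ENNReal.ofReal (Ψ (‖g y - g x‖ / p |y - x|)) with hIdef
  -- basic positivity facts
  have hpnn : ∀ x : ℝ, 0 ≤ x → 0 ≤ p x := fun x hx => hp0 ▸ p.mono hx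
  have hppos : ∀ x : ℝ, 0 < x → 0 < p x := fun x hx =>
    hp0 ▸ hp_mono (mem_Ici.mpr le_rfl) (mem_Ici.mpr hx.le) hx
  have hΨnn : ∀ x : ℝ, 0 ≤ x → 0 ≤ Ψ x := fun x hx => by
    rcases eq_or_lt_of_le hx with h | h
    · rw [← h, hΨ0]
    · exact (hΨ0 ▸ (hΨm (mem_Ici.mpr le_rfl) (mem_Ici.mpr hx) h)).le
  have hinvmono : ∀ y z : ℝ, 0 ≤ y → y ≤ z → Ψinv y ≤ Ψinv z := by
    intro y z hy hyz
    by_contra hcon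
    push_neg at hcon
    have := hΨm (mem_Ici.mpr (hinv0 z (hy.trans hyz))) (mem_Ici.mpr (hinv0 y hy)) hcon
    rw [hinvr y hy, hinvr z (hy.trans hyz)] at this
    linarith
  have hle_inv : ∀ x y : ℝ, 0 ≤ x → 0 ≤ y → Ψ x ≤ y → x ≤ Ψinv y := by
    intro x y hx hy hxy
    have := hinvmono (Ψ x) y (hΨnn x hx) hxy
    rwa [hinvl x hx] at this
  -- measurability
  have hFq : Measurable (fun q : ℝ × ℝ =>
      ENNReal.ofReal (Ψ (‖g q.2 - g q.1‖ / p |q.2 - q.1|))) := by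
    apply ENNReal.measurable_ofReal.comp
    apply hΨc.measurable.comp
    exact (((hg.comp continuous_snd).sub (hg.comp continuous_fst)).norm.measurable).div
      (hp_cont.comp ((continuous_snd.sub continuous_fst).abs)).measurable
  have hImeas : Measurable I := Measurable.lintegral_prod_right hFq
  have hgx : ∀ x : ℝ, Measurable (fun y => ENNReal.ofReal (Ψ (‖g y - g x‖ / p |y - x|))) := by
    intro x
    apply ENNReal.measurable_ofReal.comp
    apply hΨc.measurable.comp
    exact (((hg.sub continuous_const).norm).measurable).div
      (hp_cont.comp ((continuous_id.sub continuous_const).abs)).measurable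
  -- existence of the halving point
  have hdelta : ∀ x : ℝ, a < x → x ≤ b → ∃ δ, 0 < δ ∧ δ < x - a ∧ p δ = p (x - a) / 2 := by
    intro x hax hxb
    have hxa : 0 < x - a := sub_pos.mpr hax
    have hpxa : 0 < p (x - a) := hppos _ hxa
    have hmem : p (x - a) / 2 ∈ Ioo (p 0) (p (x - a)) := by
      rw [hp0]; constructor <;> linarith
    obtain ⟨δ, hδmem, hδeq⟩ := intermediate_value_Ioo hxa.le hp_cont.continuousOn hmem
    exact ⟨δ, hδmem.1, hδmem.2, hδeq⟩
  -- the invariant and step relation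
  set G : ℝ × ℝ → Prop := fun q =>
    q.1 ∈ Ioc a (a + q.2) ∧ 0 < q.2 ∧ q.2 ≤ b - a ∧ I q.1 ≤ ENNReal.ofReal (2 * B / q.2)
    with hGdef
  set R : ℝ × ℝ → ℝ × ℝ → Prop := fun q q' =>
    p q'.2 = p (q.1 - a) / 2 ∧ q'.2 < q.1 - a ∧ q'.1 < a + q'.2 ∧
      ENNReal.ofReal (Ψ (‖g q'.1 - g q.1‖ / p (q.1 - q'.1))) ≤
        ENNReal.ofReal (4 * B / (q.2 * q'.2)) with hRdef
  have hstep : ∀ q : ℝ × ℝ, G q → ∃ q', G q' ∧ R q q' := by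
    rintro ⟨x, δ⟩ ⟨hx1, hδpos, hδle, hIx⟩
    have hax : a < x := hx1.1
    have hxδ : x - a ≤ δ := by have h := hx1.2; simp only at h; linarith
    have hxb : x ≤ b := by linarith [hx1.2]
    obtain ⟨δ', hδ'pos, hδ'lt, hδ'eq⟩ := hdelta x hax hxb
    set m : ENNReal := ENNReal.ofReal δ' with hmdef
    have hm0 : m ≠ 0 := (ENNReal.ofReal_pos.mpr hδ'pos).ne'
    have hmtop : m ≠ ⊤ := ENNReal.ofReal_ne_top
    have hvol : volume (Ioo a (a + δ')) = m := by
      rw [Real.volume_Ioo]; congr 1; ring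
    have hsub : Ioo a (a + δ') ⊆ Icc a b := by
      intro y hy
      constructor
      · exact hy.1.le
      · have : a + δ' ≤ x := by linarith
        linarith [hy.2]
    have hIxfin : I x ≠ ⊤ := (lt_of_le_of_lt hIx ENNReal.ofReal_lt_top).ne
    have hsel := select hImeas (hgx x) measurableSet_Ioo
      (by rw [hvol]; exact hm0) (by rw [hvol]; exact hmtop)
      (cf := ENNReal.ofReal (2 * B / δ')) (ch := 2 * I x / m)
      ENNReal.ofReal_ne_top
      (by
        exact (ENNReal.div_lt_top (ENNReal.mul_ne_top (by norm_num) hIxfin) hm0).ne)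
      (by
        rw [hvol]
        have h1 : ∫⁻ y in Ioo a (a + δ'), I y ≤ ENNReal.ofReal B :=
          le_trans (lintegral_mono_set hsub) hIb
        have h2 : ENNReal.ofReal (2 * B / δ') * m / 2 = ENNReal.ofReal B := by
          rw [hmdef, ← ENNReal.ofReal_mul (by positivity), div_mul_cancel₀ _ hδ'pos.ne',
            show (2:ℝ) * B = 2 * B by ring, ENNReal.ofReal_mul (by norm_num : (0:ℝ) ≤ 2),
            ENNReal.ofReal_ofNat, two_mul_div_two]
        rw [h2]; exact h1)
      (by
        rw [hvol, ENNReal.div_mul_cancel hm0 hmtop, two_mul_div_two]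
        exact lintegral_mono_set hsub)
    obtain ⟨y, hy, hyI, hyΨ⟩ := hsel
    have hδ'b : δ' ≤ b - a := by linarith
    have hyx : y < x := by have := hy.2; linarith
    refine ⟨(y, δ'), ⟨⟨hy.1, hy.2.le⟩, hδ'pos, hδ'b, hyI⟩, hδ'eq, hδ'lt, hy.2, ?_⟩
    have habs : |y - x| = x - y := by
      rw [abs_sub_comm, abs_of_pos (sub_pos.mpr hyx)]
    have hch_le : 2 * I x / m ≤ ENNReal.ofReal (4 * B / (δ * δ')) := by
      have h1 : 2 * I x / m ≤ 2 * ENNReal.ofReal (2 * B / δ) / m :=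
        ENNReal.div_le_div_right (mul_le_mul_right hIx 2) m
      have h2 : (2:ENNReal) * ENNReal.ofReal (2 * B / δ) = ENNReal.ofReal (4 * B / δ) := by
        rw [show (4:ℝ) * B / δ = 2 * (2 * B / δ) by ring,
          ENNReal.ofReal_mul (by norm_num : (0:ℝ) ≤ 2), ENNReal.ofReal_ofNat]
      have h3 : ENNReal.ofReal (4 * B / δ) / m = ENNReal.ofReal (4 * B / (δ * δ')) := by
        rw [hmdef, ← ENNReal.ofReal_div_of_pos hδ'pos, div_div]
      rw [h2, h3] at h1
      exact h1
    calc ENNReal.ofReal (Ψ (‖g y - g x‖ / p (x - y)))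
        = ENNReal.ofReal (Ψ (‖g y - g x‖ / p |y - x|)) := by rw [habs]
      _ ≤ 2 * I x / m := hyΨ
      _ ≤ ENNReal.ofReal (4 * B / (δ * δ')) := hch_le
  -- the initial point
  have hG0 : G (c, b - a) := by
    exact ⟨⟨hc.1, show c ≤ a + (b - a) by linarith [hc.2]⟩,
      show (0:ℝ) < b - a by linarith, le_rfl, hIc⟩
  obtain ⟨u, hu0, hGu, hRu⟩ := exists_seq (c, b - a) hG0 hstep
  set x : ℕ → ℝ := fun n => (u n).1 with hxdef
  set δ : ℕ → ℝ := fun n => (u n).2 with hδdef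
  have hδpos : ∀ n, 0 < δ n := fun n => (hGu n).2.1
  have hxa : ∀ n, a < x n := fun n => (hGu n).1.1
  have hxδ : ∀ n, x n - a ≤ δ n := fun n => by
    have h := (hGu n).1.2; show (u n).1 - a ≤ (u n).2; linarith
  have hδb : ∀ n, δ n ≤ b - a := fun n => (hGu n).2.2.1
  have hIu : ∀ n, I (x n) ≤ ENNReal.ofReal (2 * B / δ n) := fun n => (hGu n).2.2.2
  have hpsucc : ∀ n, p (δ (n + 1)) = p (x n - a) / 2 := fun n => (hRu n).1
  have hδsucc : ∀ n, δ (n + 1) < x n - a := fun n => (hRu n).2.1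
  have hxlt : ∀ n, x (n + 1) < a + δ (n + 1) := fun n => (hRu n).2.2.1
  have hδle : ∀ n, δ (n + 1) ≤ δ n := fun n => le_trans (hδsucc n).le (hxδ n)
  have hx0 : x 0 = c := by show (u 0).1 = c; rw [hu0]
  have hδ0 : δ 0 = b - a := by show (u 0).2 = b - a; rw [hu0]
  have hxdec : ∀ n, x (n + 1) < x n := fun n => by
    have h1 := hxlt n; have h2 := hδsucc n; linarith
  have hphalf : ∀ n, p (δ (n + 1)) ≤ p (δ n) / 2 := by
    intro n
    rw [hpsucc n]
    have := p.mono (hxδ n)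
    linarith
  -- the single-step estimate
  have claim4 : ∀ n, ENNReal.ofReal (dist (g (x n)) (g (x (n + 1)))) ≤
      4 * ∫⁻ u in Ioc (δ (n + 2)) (δ (n + 1)), ENNReal.ofReal (Ψinv (4 * B / u ^ 2))
        ∂p.measure := by
    intro n
    have hxx : 0 < x n - x (n + 1) := sub_pos.mpr (hxdec n)
    have hpxx : 0 < p (x n - x (n + 1)) := hppos _ hxx
    have hq0 : 0 ≤ ‖g (x (n + 1)) - g (x n)‖ / p (x n - x (n + 1)) :=
      div_nonneg (norm_nonneg _) hpxx.le
    have hδδ : 0 < δ n * δ (n + 1) := mul_pos (hδpos n) (hδpos (n + 1))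
    have hcnn : (0:ℝ) ≤ 4 * B / (δ n * δ (n + 1)) := by positivity
    have hΨle : Ψ (‖g (x (n + 1)) - g (x n)‖ / p (x n - x (n + 1))) ≤
        4 * B / (δ n * δ (n + 1)) :=
      (ENNReal.ofReal_le_ofReal_iff hcnn).mp (hRu n).2.2.2
    have h2 : 4 * B / (δ n * δ (n + 1)) ≤ 4 * B / (δ (n + 1) ^ 2) := by
      apply div_le_div_of_nonneg_left (by linarith : (0:ℝ) ≤ 4 * B) (pow_pos (hδpos (n + 1)) 2)
      have := hδle n
      nlinarith [hδpos (n + 1)]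
    have hqle : ‖g (x (n + 1)) - g (x n)‖ / p (x n - x (n + 1)) ≤
        Ψinv (4 * B / (δ (n + 1) ^ 2)) :=
      hle_inv _ _ hq0 (by positivity) (le_trans hΨle h2)
    have hnorm : ‖g (x (n + 1)) - g (x n)‖ ≤
        Ψinv (4 * B / (δ (n + 1) ^ 2)) * p (x n - x (n + 1)) := (div_le_iff₀ hpxx).mp hqle
    have hclaim2 : p (x n - x (n + 1)) ≤ 4 * (p (δ (n + 1)) - p (δ (n + 2))) := by
      have h1 : p (x n - x (n + 1)) ≤ p (x n - a) := p.mono (by linarith [hxa (n + 1)])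
      have h2' : p (x n - a) = 2 * p (δ (n + 1)) := by rw [hpsucc n]; ring
      have h3 : p (δ (n + 2)) ≤ p (δ (n + 1)) / 2 := hphalf (n + 1)
      linarith
    have hinvnn : 0 ≤ Ψinv (4 * B / (δ (n + 1) ^ 2)) := hinv0 _ (by positivity)
    have hnorm2 : ‖g (x (n + 1)) - g (x n)‖ ≤
        4 * (Ψinv (4 * B / (δ (n + 1) ^ 2)) * (p (δ (n + 1)) - p (δ (n + 2)))) := by
      calc ‖g (x (n + 1)) - g (x n)‖ ≤
          Ψinv (4 * B / (δ (n + 1) ^ 2)) * p (x n - x (n + 1)) := hnorm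
        _ ≤ Ψinv (4 * B / (δ (n + 1) ^ 2)) * (4 * (p (δ (n + 1)) - p (δ (n + 2)))) :=
            mul_le_mul_of_nonneg_left hclaim2 hinvnn
        _ = 4 * (Ψinv (4 * B / (δ (n + 1) ^ 2)) * (p (δ (n + 1)) - p (δ (n + 2)))) := by ring
    have hmeasIoc : p.measure (Ioc (δ (n + 2)) (δ (n + 1))) =
        ENNReal.ofReal (p (δ (n + 1)) - p (δ (n + 2))) := p.measure_Ioc _ _
    have hconst : ENNReal.ofReal (Ψinv (4 * B / (δ (n + 1) ^ 2))) *
        p.measure (Ioc (δ (n + 2)) (δ (n + 1))) ≤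
        ∫⁻ u in Ioc (δ (n + 2)) (δ (n + 1)), ENNReal.ofReal (Ψinv (4 * B / u ^ 2))
          ∂p.measure := by
      rw [← setLIntegral_const]
      refine setLIntegral_mono' measurableSet_Ioc (fun v hv => ?_)
      apply ENNReal.ofReal_le_ofReal
      have hv0 : 0 < v := lt_trans (hδpos (n + 2)) hv.1
      refine hinvmono _ _ (by positivity) ?_
      apply div_le_div_of_nonneg_left (by linarith : (0:ℝ) ≤ 4 * B) (pow_pos hv0 2)
      nlinarith [hv.2, hv0, hδpos (n + 1)]
    calc ENNReal.ofReal (dist (g (x n)) (g (x (n + 1))))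
        = ENNReal.ofReal ‖g (x (n + 1)) - g (x n)‖ := by rw [dist_eq_norm']
      _ ≤ ENNReal.ofReal (4 * (Ψinv (4 * B / (δ (n + 1) ^ 2)) *
            (p (δ (n + 1)) - p (δ (n + 2))))) := ENNReal.ofReal_le_ofReal hnorm2
      _ = 4 * (ENNReal.ofReal (Ψinv (4 * B / (δ (n + 1) ^ 2))) *
            ENNReal.ofReal (p (δ (n + 1)) - p (δ (n + 2)))) := by
          rw [ENNReal.ofReal_mul (by norm_num : (0:ℝ) ≤ 4), ENNReal.ofReal_mul hinvnn,
            ENNReal.ofReal_ofNat]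
      _ = 4 * (ENNReal.ofReal (Ψinv (4 * B / (δ (n + 1) ^ 2))) *
            p.measure (Ioc (δ (n + 2)) (δ (n + 1)))) := by rw [hmeasIoc]
      _ ≤ 4 * ∫⁻ u in Ioc (δ (n + 2)) (δ (n + 1)), ENNReal.ofReal (Ψinv (4 * B / u ^ 2))
            ∂p.measure := mul_le_mul_right hconst 4
  -- summing the pieces
  have hsum_int : ∀ N, (∑ i ∈ Finset.range N,
      ∫⁻ u in Ioc (δ (i + 2)) (δ (i + 1)), ENNReal.ofReal (Ψinv (4 * B / u ^ 2)) ∂p.measure)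
      = ∫⁻ u in Ioc (δ (N + 1)) (δ 1), ENNReal.ofReal (Ψinv (4 * B / u ^ 2)) ∂p.measure := by
    intro N
    induction N with
    | zero => simp
    | succ N ih =>
      rw [Finset.sum_range_succ, ih, add_comm, ← lintegral_union measurableSet_Ioc
        (Ioc_disjoint_Ioc_of_le le_rfl), Ioc_union_Ioc_eq_Ioc (hδle (N + 1))
        (antitone_nat_of_succ_le hδle (by omega : 1 ≤ N + 1))]
  have hδ1b : δ 1 ≤ b - a := hδb 1
  have hsum : ∀ N, ENNReal.ofReal (dist (g c) (g (x N))) ≤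
      4 * ∫⁻ u in Ioc 0 (b - a), ENNReal.ofReal (Ψinv (4 * B / u ^ 2)) ∂p.measure := by
    intro N
    calc ENNReal.ofReal (dist (g c) (g (x N)))
        = ENNReal.ofReal (dist (g (x 0)) (g (x N))) := by rw [hx0]
      _ ≤ ENNReal.ofReal (∑ i ∈ Finset.range N, dist (g (x i)) (g (x (i + 1)))) :=
          ENNReal.ofReal_le_ofReal (dist_le_range_sum_dist (fun i => g (x i)) N)
      _ = ∑ i ∈ Finset.range N, ENNReal.ofReal (dist (g (x i)) (g (x (i + 1)))) :=
          ENNReal.ofReal_sum_of_nonneg (fun i _ => dist_nonneg)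
      _ ≤ ∑ i ∈ Finset.range N, 4 * ∫⁻ u in Ioc (δ (i + 2)) (δ (i + 1)),
            ENNReal.ofReal (Ψinv (4 * B / u ^ 2)) ∂p.measure :=
          Finset.sum_le_sum (fun i _ => claim4 i)
      _ = 4 * ∑ i ∈ Finset.range N, ∫⁻ u in Ioc (δ (i + 2)) (δ (i + 1)),
            ENNReal.ofReal (Ψinv (4 * B / u ^ 2)) ∂p.measure := by rw [Finset.mul_sum]
      _ = 4 * ∫⁻ u in Ioc (δ (N + 1)) (δ 1), ENNReal.ofReal (Ψinv (4 * B / u ^ 2))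
            ∂p.measure := by rw [hsum_int N]
      _ ≤ 4 * ∫⁻ u in Ioc 0 (b - a), ENNReal.ofReal (Ψinv (4 * B / u ^ 2)) ∂p.measure :=
          mul_le_mul_right (lintegral_mono_set (Ioc_subset_Ioc (hδpos (N + 1)).le hδ1b)) 4
  -- the limit x N → a
  have hgeo : ∀ n, p (δ n) ≤ p (b - a) * (1 / 2) ^ n := by
    intro n
    induction n with
    | zero => simp [hδ0]
    | succ n ih =>
      have := hphalf n
      have h2 : ((1:ℝ) / 2) ^ (n + 1) = (1 / 2) ^ n / 2 := by ring
      rw [h2]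
      linarith
  have hplim : Tendsto (fun n => p (δ n)) atTop (nhds 0) := by
    have h1 : Tendsto (fun n : ℕ => p (b - a) * (1 / 2 : ℝ) ^ n) atTop (nhds 0) := by
      have := (tendsto_pow_atTop_nhds_zero_of_lt_one (by norm_num : (0:ℝ) ≤ 1 / 2)
        (by norm_num : (1:ℝ) / 2 < 1)).const_mul (p (b - a))
      simpa using this
    exact squeeze_zero (fun n => hpnn _ (hδpos n).le) hgeo h1
  have hxalim : Tendsto (fun n => p (x n - a)) atTop (nhds 0) := by
    have heq : ∀ n, p (x n - a) = 2 * p (δ (n + 1)) := fun n => by rw [hpsucc n]; ring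
    simp only [heq]
    have h1 : Tendsto (fun n => p (δ (n + 1))) atTop (nhds 0) :=
      hplim.comp (tendsto_add_atTop_nat 1)
    simpa using h1.const_mul 2
  have hxlim : Tendsto x atTop (nhds a) := by
    rw [Metric.tendsto_atTop]
    intro ε hε
    have hε' : 0 < min ε (b - a) := lt_min hε (by linarith)
    have hpε' : 0 < p (min ε (b - a)) := hppos _ hε'
    obtain ⟨N, hN⟩ := eventually_atTop.mp (hxalim.eventually_lt_const hpε')
    refine ⟨N, fun n hn => ?_⟩
    have h1 : x n - a < min ε (b - a) := by
      by_contra hcon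
      push_neg at hcon
      exact absurd (p.mono hcon) (not_le.mpr (hN n hn))
    rw [Real.dist_eq, abs_of_pos (sub_pos.mpr (hxa n))]
    exact lt_of_lt_of_le h1 (min_le_left _ _)
  have hglim : Tendsto (fun N => ENNReal.ofReal (dist (g c) (g (x N)))) atTop
      (nhds (ENNReal.ofReal (dist (g c) (g a)))) :=
    (ENNReal.continuous_ofReal.tendsto _).comp
      (tendsto_const_nhds.dist ((hg.tendsto a).comp hxlim))
  exact le_of_tendsto' hglim hsum

end half

private lemma grr_core {d : ℕ} (p : StieltjesFunction ℝ) (hp_cont : Continuous p)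
    (hp_mono : StrictMonoOn p (Ici 0)) (hp0 : p 0 = 0)
    (Ψ Ψinv : ℝ → ℝ) (hΨc : Continuous Ψ) (hΨm : StrictMonoOn Ψ (Ici 0)) (hΨ0 : Ψ 0 = 0)
    (hinv0 : ∀ y, 0 ≤ y → 0 ≤ Ψinv y) (hinvl : ∀ x, 0 ≤ x → Ψinv (Ψ x) = x)
    (hinvr : ∀ y, 0 ≤ y → Ψ (Ψinv y) = y)
    (g : ℝ → EuclideanSpace ℝ (Fin d)) (hg : Continuous g)
    (a b : ℝ) (hab : a < b) (B : ℝ) (hB : 0 < B)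
    (hsq : ∫⁻ q in (Icc a b) ×ˢ (Icc a b),
        ENNReal.ofReal (Ψ (‖g q.2 - g q.1‖ / p |q.2 - q.1|)) ≤ ENNReal.ofReal B) :
    ENNReal.ofReal ‖g b - g a‖ ≤
      8 * ∫⁻ u in Ioc 0 (b - a), ENNReal.ofReal (Ψinv (4 * B / u ^ 2)) ∂p.measure := by
  have hFq : Measurable (fun q : ℝ × ℝ =>
      ENNReal.ofReal (Ψ (‖g q.2 - g q.1‖ / p |q.2 - q.1|))) := by
    apply ENNReal.measurable_ofReal.comp
    apply hΨc.measurable.comp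
    exact (((hg.comp continuous_snd).sub (hg.comp continuous_fst)).norm.measurable).div
      (hp_cont.comp ((continuous_snd.sub continuous_fst).abs)).measurable
  -- Tonelli
  have hIb : ∫⁻ x in Icc a b, ∫⁻ y in Icc a b,
      ENNReal.ofReal (Ψ (‖g y - g x‖ / p |y - x|)) ≤ ENNReal.ofReal B := by
    have h1 : (volume : Measure (ℝ × ℝ)).restrict ((Icc a b) ×ˢ (Icc a b)) =
        (volume.restrict (Icc a b)).prod (volume.restrict (Icc a b)) := by
      rw [Measure.prod_restrict, ← Measure.volume_eq_prod]
    rw [← lintegral_prod _ (hFq.aemeasurable), ← h1]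
    exact hsq
  set I : ℝ → ENNReal :=
    fun x => ∫⁻ y in Icc a b, ENNReal.ofReal (Ψ (‖g y - g x‖ / p |y - x|)) with hIdef
  have hImeas : Measurable I := Measurable.lintegral_prod_right hFq
  -- initial point
  have hsel := select (S := Ioo a b) (cf := ENNReal.ofReal (2 * B / (b - a)))
    (ch := (0 : ENNReal)) (h := fun _ => (0 : ENNReal)) hImeas measurable_const measurableSet_Ioo
    (by rw [Real.volume_Ioo]; exact (ENNReal.ofReal_pos.mpr (by linarith)).ne')
    (by rw [Real.volume_Ioo]; exact ENNReal.ofReal_ne_top)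
    ENNReal.ofReal_ne_top (by norm_num)
    (by
      rw [Real.volume_Ioo]
      have h2 : ENNReal.ofReal (2 * B / (b - a)) * ENNReal.ofReal (b - a) / 2 =
          ENNReal.ofReal B := by
        rw [← ENNReal.ofReal_mul (div_nonneg (by linarith) (by linarith)),
          div_mul_cancel₀ _ (sub_ne_zero.mpr hab.ne'),
          ENNReal.ofReal_mul (by norm_num : (0:ℝ) ≤ 2), ENNReal.ofReal_ofNat, two_mul_div_two]
      rw [h2]
      exact le_trans (lintegral_mono_set Ioo_subset_Icc_self) hIb)
    (by simp)
  obtain ⟨c, hcmem, hIc, -⟩ := hsel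
  -- first half : from a to c
  have h1 : ENNReal.ofReal (dist (g c) (g a)) ≤
      4 * ∫⁻ u in Ioc 0 (b - a), ENNReal.ofReal (Ψinv (4 * B / u ^ 2)) ∂p.measure :=
    grr_half p hp_cont hp_mono hp0 Ψ Ψinv hΨc hΨm hΨ0 hinv0 hinvl hinvr g hg a b hab B hB
      hIb c ⟨hcmem.1, hcmem.2.le⟩ hIc
  -- reflection
  set r : ℝ → ℝ := fun x => a + b - x with hrdef
  have hrmp : MeasurePreserving r volume volume := by
    simpa [hrdef, sub_eq_add_neg] using Measure.measurePreserving_sub_left volume (a + b)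
  have hremb : MeasurableEmbedding r := by
    have : r = fun x => a + b - x := rfl
    exact (Homeomorph.subLeft (a + b)).measurableEmbedding
  have hrpre : r ⁻¹' (Icc a b) = Icc a b := by
    ext y
    simp only [mem_preimage, mem_Icc, hrdef]
    constructor <;> intro h <;> constructor <;> linarith [h.1, h.2]
  have habs : ∀ y x : ℝ, |r y - r x| = |y - x| := by
    intro y x
    rw [hrdef]
    simp only
    rw [show a + b - y - (a + b - x) = -(y - x) by ring, abs_neg]
  -- the reflected I
  have hIrefl : ∀ x : ℝ, (∫⁻ y in Icc a b,
      ENNReal.ofReal (Ψ (‖(g ∘ r) y - (g ∘ r) x‖ / p |y - x|))) = I (r x) := by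
    intro x
    have := hrmp.setLIntegral_comp_preimage_emb hremb
      (fun z => ENNReal.ofReal (Ψ (‖g z - g (r x)‖ / p |z - r x|))) (Icc a b)
    rw [hrpre] at this
    have hgoal : I (r x) = ∫⁻ z in Icc a b,
        ENNReal.ofReal (Ψ (‖g z - g (r x)‖ / p |z - r x|)) := rfl
    rw [hgoal, ← this]
    refine setLIntegral_congr_fun measurableSet_Icc
      (fun y _ => ?_)
    simp only [Function.comp_apply]
    rw [habs y x]
  have hIb' : ∫⁻ x in Icc a b, ∫⁻ y in Icc a b,
      ENNReal.ofReal (Ψ (‖(g ∘ r) y - (g ∘ r) x‖ / p |y - x|)) ≤ ENNReal.ofReal B := by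
    have heq : ∀ x : ℝ, (∫⁻ y in Icc a b,
        ENNReal.ofReal (Ψ (‖(g ∘ r) y - (g ∘ r) x‖ / p |y - x|))) = I (r x) := hIrefl
    calc ∫⁻ x in Icc a b, ∫⁻ y in Icc a b,
          ENNReal.ofReal (Ψ (‖(g ∘ r) y - (g ∘ r) x‖ / p |y - x|))
        = ∫⁻ x in Icc a b, I (r x) := by
          exact setLIntegral_congr_fun measurableSet_Icc
            (fun x _ => heq x)
      _ = ∫⁻ x in Icc a b, I x := by
          have := hrmp.setLIntegral_comp_preimage_emb hremb I (Icc a b)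
          rw [hrpre] at this
          exact this
      _ ≤ ENNReal.ofReal B := hIb
  have hc' : a + b - c ∈ Ioc a b := ⟨by linarith [hcmem.2], by linarith [hcmem.1]⟩
  have hIc' : ∫⁻ y in Icc a b,
      ENNReal.ofReal (Ψ (‖(g ∘ r) y - (g ∘ r) (a + b - c)‖ / p |y - (a + b - c)|)) ≤
      ENNReal.ofReal (2 * B / (b - a)) := by
    have := hIrefl (a + b - c)
    rw [this]
    have hrc : r (a + b - c) = c := by rw [hrdef]; ring
    rw [hrc]
    exact hIc
  have h2 : ENNReal.ofReal (dist (g c) (g b)) ≤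
      4 * ∫⁻ u in Ioc 0 (b - a), ENNReal.ofReal (Ψinv (4 * B / u ^ 2)) ∂p.measure := by
    have := grr_half p hp_cont hp_mono hp0 Ψ Ψinv hΨc hΨm hΨ0 hinv0 hinvl hinvr (g ∘ r)
      (hg.comp (by rw [hrdef]; exact continuous_const.sub continuous_id)) a b hab B hB hIb' (a + b - c) hc' hIc'
    have hgc : (g ∘ r) (a + b - c) = g c := by
      simp only [Function.comp_apply]; congr 1; rw [hrdef]; ring
    have hga : (g ∘ r) a = g b := by
      simp only [Function.comp_apply]; congr 1; rw [hrdef]; ring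
    rwa [hgc, hga] at this
  calc ENNReal.ofReal ‖g b - g a‖
      = ENNReal.ofReal (dist (g b) (g a)) := by rw [dist_eq_norm]
    _ ≤ ENNReal.ofReal (dist (g b) (g c) + dist (g c) (g a)) :=
        ENNReal.ofReal_le_ofReal (dist_triangle _ _ _)
    _ ≤ ENNReal.ofReal (dist (g b) (g c)) + ENNReal.ofReal (dist (g c) (g a)) :=
        ENNReal.ofReal_add_le
    _ = ENNReal.ofReal (dist (g c) (g b)) + ENNReal.ofReal (dist (g c) (g a)) := by
        rw [dist_comm]
    _ ≤ (4 * ∫⁻ u in Ioc 0 (b - a), ENNReal.ofReal (Ψinv (4 * B / u ^ 2)) ∂p.measure) +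
        4 * ∫⁻ u in Ioc 0 (b - a), ENNReal.ofReal (Ψinv (4 * B / u ^ 2)) ∂p.measure :=
        add_le_add h2 h1
    _ = 8 * ∫⁻ u in Ioc 0 (b - a), ENNReal.ofReal (Ψinv (4 * B / u ^ 2)) ∂p.measure := by
        rw [← add_mul]; norm_num

/-- **Garsia–Rodemich–Rumsey inequality.** If `p, Ψ` are strictly increasing continuous
functions on `[0,∞)` vanishing at `0`, with `Ψ → ∞` and inverse `Ψinv`, `g` is continuous on
`[0,T]` with values in `ℝ^d`, and the double integral of `Ψ(‖g t − g s‖ / p |t−s|)` over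
`{(s,t) ∈ [0,T]² : s ≠ t}` is at most `B`, then for all `0 ≤ s ≤ t ≤ T`,
`‖g t − g s‖ ≤ 8 ∫_{(0,t−s]} Ψ⁻¹(4B/u²) dμ_p` (interpreted in `[0,∞]`). -/
theorem stmt_0 {d : ℕ} (p : StieltjesFunction ℝ) (Ψ Ψinv : ℝ → ℝ)
    (hp_cont : Continuous p) (hp_mono : StrictMonoOn p (Ici 0)) (hp0 : p 0 = 0)
    (hΨ_cont : ContinuousOn Ψ (Ici 0)) (hΨ_mono : StrictMonoOn Ψ (Ici 0))
    (hΨ0 : Ψ 0 = 0) (hΨ_top : Filter.Tendsto Ψ Filter.atTop Filter.atTop)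
    (hΨinv_nonneg : ∀ y, 0 ≤ y → 0 ≤ Ψinv y)
    (hΨinv_left : ∀ x, 0 ≤ x → Ψinv (Ψ x) = x)
    (hΨinv_right : ∀ y, 0 ≤ y → Ψ (Ψinv y) = y)
    (T : ℝ) (hT : 0 < T) (g : ℝ → EuclideanSpace ℝ (Fin d))
    (hg : ContinuousOn g (Icc 0 T)) (B : ℝ) (hB : 0 < B)
    (hbound : ∫⁻ st in {st : ℝ × ℝ | st.1 ∈ Icc 0 T ∧ st.2 ∈ Icc 0 T ∧ st.1 ≠ st.2},
        ENNReal.ofReal (Ψ (‖g st.2 - g st.1‖ / p |st.2 - st.1|)) ≤ ENNReal.ofReal B) :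
    ∀ s t : ℝ, 0 ≤ s → s ≤ t → t ≤ T →
      ENNReal.ofReal ‖g t - g s‖ ≤
        8 * ∫⁻ u in Ioc 0 (t - s), ENNReal.ofReal (Ψinv (4 * B / u ^ 2)) ∂p.measure := by
  intro s t hs hst htT
  rcases eq_or_lt_of_le hst with heq | hlt
  · subst heq
    simp
  · -- modified (globally defined) versions of g and Ψ
    have hpnn : ∀ x : ℝ, 0 ≤ x → 0 ≤ p x := fun x hx => hp0 ▸ p.mono hx
    set cl : ℝ → ℝ := fun x => max 0 (min x T) with hcldef
    have hclcont : Continuous cl := continuous_const.max (continuous_id.min continuous_const)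
    have hclmem : ∀ x, cl x ∈ Icc 0 T :=
      fun x => ⟨le_max_left _ _, max_le hT.le (min_le_right _ _)⟩
    set g' : ℝ → EuclideanSpace ℝ (Fin d) := g ∘ cl with hg'def
    have hg'cont : Continuous g' := hg.comp_continuous hclcont hclmem
    have hgeq : ∀ x ∈ Icc 0 T, g' x = g x := by
      intro x hx
      have : cl x = x := by
        rw [hcldef]; simp only
        rw [min_eq_left hx.2, max_eq_right hx.1]
      simp only [hg'def, Function.comp_apply, this]
    set Ψ' : ℝ → ℝ := fun x => Ψ (max x 0) with hΨ'def
    have hΨ'cont : Continuous Ψ' :=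
      hΨ_cont.comp_continuous (continuous_id.max continuous_const)
        (fun x => mem_Ici.mpr (le_max_right x 0))
    have hΨeq : ∀ x : ℝ, 0 ≤ x → Ψ' x = Ψ x := by
      intro x hx
      simp only [hΨ'def, max_eq_left hx]
    have hΨ'm : StrictMonoOn Ψ' (Ici 0) := by
      intro x hx y hy hxy
      rw [hΨeq x hx, hΨeq y hy]
      exact hΨ_mono hx hy hxy
    have hΨ'0 : Ψ' 0 = 0 := by rw [hΨeq 0 le_rfl]; exact hΨ0
    have hinvl' : ∀ x, 0 ≤ x → Ψinv (Ψ' x) = x := by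
      intro x hx; rw [hΨeq x hx]; exact hΨinv_left x hx
    have hinvr' : ∀ y, 0 ≤ y → Ψ' (Ψinv y) = y := by
      intro y hy; rw [hΨeq _ (hΨinv_nonneg y hy)]; exact hΨinv_right y hy
    have hsubIcc : Icc s t ⊆ Icc 0 T := Icc_subset_Icc hs htT
    -- the square integral bound
    have hsq : ∫⁻ q in (Icc s t) ×ˢ (Icc s t),
        ENNReal.ofReal (Ψ' (‖g' q.2 - g' q.1‖ / p |q.2 - q.1|)) ≤ ENNReal.ofReal B := by
      have hmeas_sq : MeasurableSet ((Icc s t) ×ˢ (Icc s t) : Set (ℝ × ℝ)) :=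
        measurableSet_Icc.prod measurableSet_Icc
      have hcongr : ∫⁻ q in (Icc s t) ×ˢ (Icc s t),
          ENNReal.ofReal (Ψ' (‖g' q.2 - g' q.1‖ / p |q.2 - q.1|)) =
          ∫⁻ q in (Icc s t) ×ˢ (Icc s t),
          ENNReal.ofReal (Ψ (‖g q.2 - g q.1‖ / p |q.2 - q.1|)) := by
        refine setLIntegral_congr_fun hmeas_sq (fun q hq => ?_)
        have h1 : q.1 ∈ Icc 0 T := hsubIcc hq.1
        have h2 : q.2 ∈ Icc 0 T := hsubIcc hq.2
        rw [hgeq _ h1, hgeq _ h2,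
          hΨeq _ (div_nonneg (norm_nonneg _) (hpnn _ (abs_nonneg _)))]
      rw [hcongr]
      set A : Set (ℝ × ℝ) := {st | st.1 ∈ Icc 0 T ∧ st.2 ∈ Icc 0 T ∧ st.1 ≠ st.2} with hAdef
      set D : Set (ℝ × ℝ) := {q | q.1 = q.2} with hDdef
      have hDmeas : MeasurableSet D := measurableSet_eq_fun measurable_fst measurable_snd
      have hsub : (Icc s t) ×ˢ (Icc s t) ⊆ A ∪ D := by
        rintro ⟨x, y⟩ ⟨hx, hy⟩
        by_cases hxy : x = y
        · exact Or.inr hxy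
        · exact Or.inl ⟨hsubIcc hx, hsubIcc hy, hxy⟩
      have hD0 : ∫⁻ q in D, ENNReal.ofReal (Ψ (‖g q.2 - g q.1‖ / p |q.2 - q.1|)) = 0 := by
        have : ∫⁻ q in D, ENNReal.ofReal (Ψ (‖g q.2 - g q.1‖ / p |q.2 - q.1|)) =
            ∫⁻ _ in D, 0 := by
          refine setLIntegral_congr_fun hDmeas (fun q hq => ?_)
          have hq' : q.1 = q.2 := hq
          rw [hq', sub_self, norm_zero, zero_div, hΨ0, ENNReal.ofReal_zero]
        rw [this, lintegral_zero]
      calc ∫⁻ q in (Icc s t) ×ˢ (Icc s t),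
            ENNReal.ofReal (Ψ (‖g q.2 - g q.1‖ / p |q.2 - q.1|))
          ≤ ∫⁻ q in A ∪ D, ENNReal.ofReal (Ψ (‖g q.2 - g q.1‖ / p |q.2 - q.1|)) :=
            lintegral_mono_set hsub
        _ ≤ (∫⁻ q in A, ENNReal.ofReal (Ψ (‖g q.2 - g q.1‖ / p |q.2 - q.1|))) +
            ∫⁻ q in D, ENNReal.ofReal (Ψ (‖g q.2 - g q.1‖ / p |q.2 - q.1|)) :=
            lintegral_union_le _ _ _
        _ ≤ ENNReal.ofReal B + 0 := add_le_add hbound (le_of_eq hD0)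
        _ = ENNReal.ofReal B := add_zero _
    have hmain := grr_core p hp_cont hp_mono hp0 Ψ' Ψinv hΨ'cont hΨ'm hΨ'0 hΨinv_nonneg
      hinvl' hinvr' g' hg'cont s t hlt B hB hsq
    rwa [hgeq t ⟨le_trans hs hst, htT⟩, hgeq s ⟨hs, le_trans hst htT⟩] at hmain
end

section
/- Let W and H be real Hilbert spaces, P : W → H a bounded linear map with adjoint P*, and B : W × W → ℝ a bounded, symmetric, coercive bilinear form represented by the invertible bounded operator T : W → W (⟨Tu,v⟩_W = B(u,v)). Suppose in addition that for some λ>0 one has B(u,u) ≥ λ‖Pu‖²_H for all u∈W. Then the operator R = P ∘ T⁻¹ ∘ P* : H → H satisfies λ‖Rφ‖_H ≤ ‖φ‖_H for every φ∈H; that is, λR is a contraction of H. -/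
open MeasureTheory

/-- Abstract contraction property of the boundary resolvent: if the bounded, symmetric,
coercive bilinear form `B` represented by the invertible operator `T` also satisfies
`B(u,u) ≥ λ‖Pu‖²`, then the operator `R = P ∘ T⁻¹ ∘ P*` satisfies `λ‖Rφ‖ ≤ ‖φ‖` for
every `φ`, i.e. `λR` is a contraction. -/
theorem stmt_6 {W H : Type*}
    [NormedAddCommGroup W] [InnerProductSpace ℝ W] [CompleteSpace W]
    [NormedAddCommGroup H] [InnerProductSpace ℝ H] [CompleteSpace H]
    (P : W →L[ℝ] H) (B : W → W → ℝ) (T Tinv : W →L[ℝ] W)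
    (hT : ∀ u v : W, (inner ℝ (T u) v : ℝ) = B u v)
    (hsymm : ∀ u v : W, B u v = B v u)
    (c : ℝ) (hc : 0 < c) (hcoer : ∀ u : W, c * ‖u‖ ^ 2 ≤ B u u)
    (hTinv_left : ∀ u, Tinv (T u) = u) (hTinv_right : ∀ u, T (Tinv u) = u)
    (lam : ℝ) (hlam : 0 < lam)
    (hPcoer : ∀ u : W, lam * ‖P u‖ ^ 2 ≤ B u u) :
    ∀ φ : H, lam * ‖P (Tinv ((ContinuousLinearMap.adjoint P) φ))‖ ≤ ‖φ‖ := by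
  intro φ
  set u := Tinv ((ContinuousLinearMap.adjoint P) φ) with hu
  have hTu : T u = (ContinuousLinearMap.adjoint P) φ := hTinv_right _
  have hBu : B u u = inner ℝ φ (P u) := by
    rw [← hT u u, hTu, ContinuousLinearMap.adjoint_inner_left]
  have h1 : lam * ‖P u‖ ^ 2 ≤ ‖φ‖ * ‖P u‖ := by
    calc lam * ‖P u‖ ^ 2 ≤ B u u := hPcoer u
      _ = inner ℝ φ (P u) := hBu
      _ ≤ ‖φ‖ * ‖P u‖ := real_inner_le_norm _ _
  rcases eq_or_lt_of_le (norm_nonneg (P u)) with h0 | h0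
  · rw [← h0, mul_zero]; exact norm_nonneg φ
  · have := (mul_le_mul_iff_of_pos_right h0).mp (by nlinarith : lam * ‖P u‖ * ‖P u‖ ≤ ‖φ‖ * ‖P u‖)
    exact this
end

section
/- Let H be a real Hilbert space and let (R_λ)_{λ>0} be a family of bounded self-adjoint linear operators on H satisfying: (i) the resolvent identity (λ−μ)R_λR_μ = R_μ − R_λ for all λ,μ>0, and (ii) λ‖R_λφ‖² ≤ ⟨R_λφ, φ⟩ for all λ>0 and φ∈H. Let K = {ψ ∈ H : λR_λψ = ψ for all λ>0}, a closed linear subspace of H, and let P_K denote the orthogonal projection of H onto K. Then for every φ ∈ H, λR_λφ converges strongly to P_K φ as λ → 0⁺: ‖λR_λφ − P_K φ‖ → 0. -/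
open Filter

section Aux

variable {H : Type*} [NormedAddCommGroup H] [InnerProductSpace ℝ H] [CompleteSpace H]

/-- contraction bound: `‖λ • R_λ g‖ ≤ ‖g‖`. -/
lemma aux_contr (R : ℝ → H →L[ℝ] H)
    (hbnd : ∀ lam : ℝ, 0 < lam → ∀ φ : H,
      lam * ‖R lam φ‖ ^ 2 ≤ (inner ℝ (R lam φ) φ : ℝ))
    {lam : ℝ} (hlam : 0 < lam) (g : H) : ‖lam • R lam g‖ ≤ ‖g‖ := by
  have h1 := hbnd lam hlam g
  have h2 : (inner ℝ (R lam g) g : ℝ) ≤ ‖R lam g‖ * ‖g‖ := real_inner_le_norm _ _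
  rw [norm_smul, Real.norm_eq_abs, abs_of_pos hlam]
  rcases eq_or_lt_of_le (norm_nonneg (R lam g)) with h | h
  · rw [← h]; simpa using norm_nonneg g
  · nlinarith [h1, h2, h]

/-- convergence to zero on the generators `φ - μ • R_μ φ`. -/
lemma aux_gen (R : ℝ → H →L[ℝ] H)
    (hres : ∀ lam mu : ℝ, 0 < lam → 0 < mu → ∀ φ : H,
      (lam - mu) • R lam (R mu φ) = R mu φ - R lam φ)
    (hbnd : ∀ lam : ℝ, 0 < lam → ∀ φ : H,
      lam * ‖R lam φ‖ ^ 2 ≤ (inner ℝ (R lam φ) φ : ℝ))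
    {mu : ℝ} (hmu : 0 < mu) (φ : H) :
    Tendsto (fun lam : ℝ => lam • R lam (φ - mu • R mu φ))
      (nhdsWithin 0 (Set.Ioi 0)) (nhds 0) := by
  have hb : Tendsto (fun lam : ℝ => lam / (mu - lam) * (2 * ‖φ‖))
      (nhdsWithin 0 (Set.Ioi 0)) (nhds 0) := by
    have hc : ContinuousAt (fun lam : ℝ => lam / (mu - lam) * (2 * ‖φ‖)) 0 := by
      apply ContinuousAt.mul _ continuousAt_const
      exact (continuousAt_id.div (continuousAt_const.sub continuousAt_id) (by simpa using hmu.ne'))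
    have := hc.tendsto.mono_left (nhdsWithin_le_nhds (s := Set.Ioi (0:ℝ)))
    simpa using this
  apply squeeze_zero_norm' _ hb
  filter_upwards [Ioo_mem_nhdsGT_of_mem (Set.mem_Ico.mpr ⟨le_refl (0:ℝ), hmu⟩)] with lam hlam
  obtain ⟨hl0, hlmu⟩ := hlam
  have hne : lam - mu ≠ 0 := by intro h; nlinarith
  -- key identity
  have hid : lam • R lam (φ - mu • R mu φ)
      = (lam / (lam - mu)) • (lam • R lam φ - mu • R mu φ) := by
    have h1 := hres lam mu hl0 hmu φ
    have hA : R lam (R mu φ) = (lam - mu)⁻¹ • (R mu φ - R lam φ) := by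
      rw [← h1, smul_smul, inv_mul_cancel₀ hne, one_smul]
    rw [map_sub, map_smul, hA]
    match_scalars <;> (field_simp; try ring)
  rw [hid, norm_smul, Real.norm_eq_abs]
  have habs : |lam / (lam - mu)| = lam / (mu - lam) := by
    rw [abs_div, abs_of_pos hl0, abs_of_neg (by linarith : lam - mu < 0)]
    ring_nf
  rw [habs]
  have hn : ‖lam • R lam φ - mu • R mu φ‖ ≤ 2 * ‖φ‖ := by
    calc ‖lam • R lam φ - mu • R mu φ‖ ≤ ‖lam • R lam φ‖ + ‖mu • R mu φ‖ := norm_sub_le _ _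
    _ ≤ ‖φ‖ + ‖φ‖ := add_le_add (aux_contr R hbnd hl0 φ) (aux_contr R hbnd hmu φ)
    _ = 2 * ‖φ‖ := by ring
  have hpos : 0 ≤ lam / (mu - lam) := div_nonneg hl0.le (by linarith)
  exact mul_le_mul_of_nonneg_left hn hpos


/-- convergence to zero on the closure of the span of the generators. -/
lemma aux_closure (R : ℝ → H →L[ℝ] H)
    (hres : ∀ lam mu : ℝ, 0 < lam → 0 < mu → ∀ φ : H,
      (lam - mu) • R lam (R mu φ) = R mu φ - R lam φ)
    (hbnd : ∀ lam : ℝ, 0 < lam → ∀ φ : H,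
      lam * ‖R lam φ‖ ^ 2 ≤ (inner ℝ (R lam φ) φ : ℝ))
    {x : H}
    (hx : x ∈ closure ((Submodule.span ℝ
      {y : H | ∃ mu : ℝ, 0 < mu ∧ ∃ φ : H, y = φ - mu • R mu φ} : Submodule ℝ H) : Set H)) :
    Tendsto (fun lam : ℝ => lam • R lam x) (nhdsWithin 0 (Set.Ioi 0)) (nhds 0) := by
  set S : Submodule ℝ H := Submodule.span ℝ
      {y : H | ∃ mu : ℝ, 0 < mu ∧ ∃ φ : H, y = φ - mu • R mu φ} with hS
  -- convergence on the span itself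
  have hspan : ∀ y ∈ S, Tendsto (fun lam : ℝ => lam • R lam y)
      (nhdsWithin 0 (Set.Ioi 0)) (nhds 0) := by
    intro y hy
    induction hy using Submodule.span_induction with
    | mem z hz =>
      obtain ⟨mu, hmu, φ, rfl⟩ := hz
      exact aux_gen R hres hbnd hmu φ
    | zero =>
      have he : (fun lam : ℝ => lam • R lam (0:H)) = fun _ => (0:H) := by
        funext lam; rw [map_zero, smul_zero]
      rw [he]; exact tendsto_const_nhds
    | add a b _ _ ha hb =>
      have he : (fun lam : ℝ => lam • R lam (a + b))
          = fun lam : ℝ => lam • R lam a + lam • R lam b := by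
        funext lam; rw [map_add, smul_add]
      rw [he]; simpa using ha.add hb
    | smul c a _ ha =>
      have he : (fun lam : ℝ => lam • R lam (c • a))
          = fun lam : ℝ => c • (lam • R lam a) := by
        funext lam; rw [map_smul, smul_comm]
      rw [he]; simpa using ha.const_smul c
  -- extend to the closure by a 3ε argument
  rw [NormedAddCommGroup.tendsto_nhds_zero]
  intro ε hε
  obtain ⟨y, hyS, hxy⟩ := Metric.mem_closure_iff.mp hx (ε/2) (by linarith)
  have h1 := (NormedAddCommGroup.tendsto_nhds_zero.mp (hspan y hyS)) (ε/2) (by linarith)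
  filter_upwards [h1, self_mem_nhdsWithin] with lam h2 (h3 : lam ∈ Set.Ioi 0)
  have hl : (0:ℝ) < lam := h3
  have hsplit : lam • R lam x = lam • R lam (x - y) + lam • R lam y := by
    rw [← smul_add, ← map_add, sub_add_cancel]
  calc ‖lam • R lam x‖ ≤ ‖lam • R lam (x - y)‖ + ‖lam • R lam y‖ := by
        rw [hsplit]; exact norm_add_le _ _
    _ ≤ ‖x - y‖ + ‖lam • R lam y‖ := by
        exact add_le_add_left (aux_contr R hbnd hl (x - y)) _
    _ < ε/2 + ε/2 := by
        apply add_lt_add _ h2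
        rw [← dist_eq_norm]; exact hxy
    _ = ε := by ring

end Aux

/-- Abstract ergodic property of the boundary resolvent family: if `(R_λ)_{λ>0}` is a family
of bounded self-adjoint operators on a real Hilbert space satisfying the resolvent identity
and `λ‖R_λφ‖² ≤ ⟨R_λφ,φ⟩`, then for every `φ`, `λR_λφ` converges strongly as `λ → 0⁺` to the
orthogonal projection of `φ` onto the common fixed subspace `K = {ψ : λR_λψ = ψ ∀λ>0}`
(characterized by: the limit `ψ` lies in `K` and `φ − ψ ⊥ K`). -/
theorem stmt_8 {H : Type*} [NormedAddCommGroup H] [InnerProductSpace ℝ H] [CompleteSpace H]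
    (R : ℝ → H →L[ℝ] H)
    (hsa : ∀ lam : ℝ, 0 < lam → ∀ φ ψ : H, (inner ℝ (R lam φ) ψ : ℝ) = inner ℝ φ (R lam ψ))
    (hres : ∀ lam mu : ℝ, 0 < lam → 0 < mu → ∀ φ : H,
      (lam - mu) • R lam (R mu φ) = R mu φ - R lam φ)
    (hbnd : ∀ lam : ℝ, 0 < lam → ∀ φ : H,
      lam * ‖R lam φ‖ ^ 2 ≤ (inner ℝ (R lam φ) φ : ℝ)) :
    ∀ φ : H, ∃ ψ : H, (∀ lam : ℝ, 0 < lam → lam • R lam ψ = ψ) ∧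
      (∀ χ : H, (∀ lam : ℝ, 0 < lam → lam • R lam χ = χ) → (inner ℝ (φ - ψ) χ : ℝ) = 0) ∧
      Tendsto (fun lam : ℝ => lam • R lam φ) (nhdsWithin 0 (Set.Ioi 0)) (nhds ψ) := by
  intro φ
  -- the fixed subspace K
  set K : Submodule ℝ H :=
    { carrier := {ψ : H | ∀ lam : ℝ, 0 < lam → lam • R lam ψ = ψ}
      add_mem' := by
        intro a b ha hb lam hl
        rw [map_add, smul_add, ha lam hl, hb lam hl]
      zero_mem' := by intro lam hl; simp
      smul_mem' := by
        intro c a ha lam hl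
        rw [map_smul, smul_comm, ha lam hl] } with hK
  have hKmem : ∀ ψ : H, ψ ∈ K ↔ ∀ lam : ℝ, 0 < lam → lam • R lam ψ = ψ := fun ψ => Iff.rfl
  -- K is closed
  have hKclosed : IsClosed (K : Set H) := by
    have : (K : Set H) = ⋂ (lam : ℝ) (_ : 0 < lam), {ψ : H | lam • R lam ψ = ψ} := by
      ext ψ; simp [hKmem]
    rw [this]
    exact isClosed_iInter fun lam => isClosed_iInter fun hl =>
      isClosed_eq (((R lam).continuous).const_smul lam) continuous_id
  haveI : CompleteSpace K := hKclosed.completeSpace_coe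
  -- the span of generators
  set S : Submodule ℝ H := Submodule.span ℝ
      {y : H | ∃ mu : ℝ, 0 < mu ∧ ∃ φ : H, y = φ - mu • R mu φ} with hS
  -- Sᗮ ≤ K
  have hSK : Sᗮ ≤ K := by
    intro ψ hψ
    rw [hKmem]
    intro mu hmu
    have hz : ∀ χ : H, (inner ℝ (ψ - mu • R mu ψ) χ : ℝ) = 0 := by
      intro χ
      have hgen : χ - mu • R mu χ ∈ S := Submodule.subset_span ⟨mu, hmu, χ, rfl⟩
      have h0 : (inner ℝ (χ - mu • R mu χ) ψ : ℝ) = 0 :=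
        (Submodule.mem_orthogonal S ψ).mp hψ _ hgen
      have : (inner ℝ χ ψ : ℝ) - mu * inner ℝ (R mu χ) ψ = 0 := by
        simpa [inner_sub_left, real_inner_smul_left] using h0
      rw [hsa mu hmu χ ψ] at this
      have : (inner ℝ χ ψ : ℝ) - mu * inner ℝ χ (R mu ψ) = 0 := this
      calc (inner ℝ (ψ - mu • R mu ψ) χ : ℝ) = inner ℝ χ (ψ - mu • R mu ψ) := real_inner_comm _ _
        _ = (inner ℝ χ ψ : ℝ) - mu * inner ℝ χ (R mu ψ) := by
            rw [inner_sub_right, real_inner_smul_right]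
        _ = 0 := this
    have hzero : ψ - mu • R mu ψ = 0 := by
      have := hz (ψ - mu • R mu ψ)
      exact inner_self_eq_zero.mp this
    exact (sub_eq_zero.mp hzero).symm
  -- define ψ as the orthogonal projection onto K
  set ψ := (K.orthogonalProjectionOnto φ : H) with hψdef
  have hψK : ψ ∈ K := (K.orthogonalProjectionOnto φ).2
  have hperp : φ - ψ ∈ Kᗮ := K.sub_starProjection_mem_orthogonal φ
  refine ⟨ψ, (hKmem ψ).mp hψK, ?_, ?_⟩
  · intro χ hχ
    have hχK : χ ∈ K := (hKmem χ).mpr hχ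
    have := (Submodule.mem_orthogonal K (φ - ψ)).mp hperp χ hχK
    rw [real_inner_comm] at this
    exact this
  · -- convergence
    have hmemS : φ - ψ ∈ closure (S : Set H) := by
      have h1 : Kᗮ ≤ Sᗮᗮ := Submodule.orthogonal_le hSK
      have h2 : Sᗮᗮ = S.topologicalClosure := Submodule.orthogonal_orthogonal_eq_closure S
      have := h1 hperp
      rw [h2] at this
      rwa [← Submodule.topologicalClosure_coe]
    have hconv := aux_closure R hres hbnd hmemS
    have heq : ∀ lam : ℝ, 0 < lam → lam • R lam φ = ψ + lam • R lam (φ - ψ) := by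
      intro lam hl
      have : lam • R lam (φ - ψ) = lam • R lam φ - lam • R lam ψ := by
        rw [map_sub, smul_sub]
      rw [this, ((hKmem ψ).mp hψK) lam hl]
      abel
    have : Tendsto (fun lam : ℝ => ψ + lam • R lam (φ - ψ))
        (nhdsWithin 0 (Set.Ioi 0)) (nhds (ψ + 0)) := tendsto_const_nhds.add hconv
    rw [add_zero] at this
    apply this.congr'
    filter_upwards [self_mem_nhdsWithin] with lam (hl : lam ∈ Set.Ioi 0)
    exact (heq lam hl).symm
end

section
/- Let T > 0. Let x_n, x : [0,T] → ℝ be continuous functions with x_n → x uniformly on [0,T], and let v_n, v : [0,T] → ℝ be continuous nondecreasing functions with v_n → v uniformly on [0,T]. For a continuous nondecreasing w : [0,T] → ℝ let μ_w denote its Lebesgue–Stieltjes measure (extending w constantly outside [0,T]). Then sup_{t∈[0,T]} | ∫_{(0,t]} x_n dμ_{v_n} − ∫_{(0,t]} x dμ_v | → 0 as n → ∞; in particular the functions t ↦ ∫_{(0,t]} x_n dμ_{v_n} converge uniformly on [0,T] to t ↦ ∫_{(0,t]} x dμ_v. -/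
open MeasureTheory Filter

/-- The Lebesgue–Stieltjes measure of a monotone continuous function `w : ℝ → ℝ`. -/
noncomputable def lsMeasure (w : ℝ → ℝ) (hm : Monotone w) (hc : Continuous w) :
    Measure ℝ :=
  StieltjesFunction.measure ⟨w, hm, fun _ => hc.continuousWithinAt⟩

lemma lsMeasure_Ioc (w : ℝ → ℝ) (hm : Monotone w) (hc : Continuous w) (a b : ℝ) :
    lsMeasure w hm hc (Set.Ioc a b) = ENNReal.ofReal (w b - w a) :=
  StieltjesFunction.measure_Ioc _ _ _

lemma lsMeasure_locFinite (w : ℝ → ℝ) (hm : Monotone w) (hc : Continuous w) :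
    IsLocallyFiniteMeasure (lsMeasure w hm hc) := by
  unfold lsMeasure; infer_instance

lemma Ioc_min_subset (a b t : ℝ) : Set.Ioc (min a t) (min b t) ⊆ Set.Ioc a b := by
  intro u hu
  refine ⟨?_, hu.2.trans (min_le_left _ _)⟩
  by_cases h : a ≤ t
  · rw [min_eq_left h] at hu; exact hu.1
  · exfalso
    have h1 : min a t = t := min_eq_right (le_of_not_ge h)
    have h2 : u ≤ t := hu.2.trans (min_le_right _ _)
    rw [h1] at hu
    exact absurd (hu.1.trans_le h2) (lt_irrefl t)

lemma sum_integral_Ioc (f : ℝ → ℝ) (μ : Measure ℝ) (p : ℕ → ℝ) (hp : Monotone p) (k : ℕ)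
    (hint : MeasureTheory.IntegrableOn f (Set.Ioc (p 0) (p k)) μ) :
    ∑ i ∈ Finset.range k, ∫ u in Set.Ioc (p i) (p (i + 1)), f u ∂μ
      = ∫ u in Set.Ioc (p 0) (p k), f u ∂μ := by
  induction k with
  | zero => simp
  | succ k ih =>
    have h0k : p 0 ≤ p k := hp (Nat.zero_le k)
    have hkk : p k ≤ p (k + 1) := hp (Nat.le_succ k)
    have hsub1 : Set.Ioc (p 0) (p k) ⊆ Set.Ioc (p 0) (p (k + 1)) :=
      Set.Ioc_subset_Ioc_right hkk
    have hsub2 : Set.Ioc (p k) (p (k + 1)) ⊆ Set.Ioc (p 0) (p (k + 1)) :=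
      Set.Ioc_subset_Ioc_left h0k
    rw [Finset.sum_range_succ, ih (hint.mono_set hsub1),
      ← MeasureTheory.setIntegral_union (Set.Ioc_disjoint_Ioc_of_le le_rfl) measurableSet_Ioc
        (hint.mono_set hsub1) (hint.mono_set hsub2),
      Set.Ioc_union_Ioc_eq_Ioc h0k hkk]

lemma piece_est (μ : Measure ℝ) (w : ℝ → ℝ) (hm : Monotone w)
    (hIoc : ∀ a b : ℝ, μ (Set.Ioc a b) = ENNReal.ofReal (w b - w a))
    (f : ℝ → ℝ) (a b : ℝ) (hab : a ≤ b)
    (hint : MeasureTheory.IntegrableOn f (Set.Ioc a b) μ)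
    (δ : ℝ) (hf : ∀ u ∈ Set.Ioc a b, |f u| ≤ δ) :
    |∫ u in Set.Ioc a b, f u ∂μ| ≤ δ * (w b - w a) := by
  have h1 : (μ (Set.Ioc a b)).toReal = w b - w a := by
    rw [hIoc, ENNReal.toReal_ofReal (sub_nonneg.2 (hm hab))]
  have h2 : μ (Set.Ioc a b) < ⊤ := by rw [hIoc]; exact ENNReal.ofReal_lt_top
  have h3 := norm_setIntegral_le_of_norm_le_const (C := δ) h2
    (fun u hu => by rw [Real.norm_eq_abs]; exact hf u hu)
  rwa [Real.norm_eq_abs, measureReal_def, h1] at h3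

lemma piece_diff (μ : Measure ℝ) (w : ℝ → ℝ) (hm : Monotone w)
    (hIoc : ∀ a b : ℝ, μ (Set.Ioc a b) = ENNReal.ofReal (w b - w a))
    (f : ℝ → ℝ) (c a b : ℝ) (hab : a ≤ b)
    (hint : MeasureTheory.IntegrableOn f (Set.Ioc a b) μ)
    (δ : ℝ) (hf : ∀ u ∈ Set.Ioc a b, |f u - c| ≤ δ) :
    |(∫ u in Set.Ioc a b, f u ∂μ) - c * (w b - w a)| ≤ δ * (w b - w a) := by
  have hconst : MeasureTheory.IntegrableOn (fun _ : ℝ => c) (Set.Ioc a b) μ :=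
    integrableOn_const (by rw [hIoc]; exact ENNReal.ofReal_ne_top)
  have hconst_int : ∫ _u in Set.Ioc a b, c ∂μ = c * (w b - w a) := by
    rw [setIntegral_const, smul_eq_mul, measureReal_def, hIoc,
      ENNReal.toReal_ofReal (sub_nonneg.2 (hm hab))]
    ring
  have heq : (∫ u in Set.Ioc a b, f u ∂μ) - c * (w b - w a)
      = ∫ u in Set.Ioc a b, (f u - c) ∂μ := by
    rw [integral_sub hint hconst, hconst_int]
  rw [heq]
  exact piece_est μ w hm hIoc _ a b hab (hint.sub hconst) δ hf

set_option maxHeartbeats 1000000 in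
/-- Continuity of the map `(x,v) ↦ ∫₀^· x dv`: if `xₙ → x` uniformly on `[0,T]`
(continuous functions) and `vₙ → v` uniformly on `[0,T]` (continuous nondecreasing
functions, extended constantly outside `[0,T]`), then
`t ↦ ∫_{(0,t]} xₙ dμ_{vₙ}` converges uniformly on `[0,T]` to `t ↦ ∫_{(0,t]} x dμ_v`. -/
theorem stmt_13 (T : ℝ) (hT : 0 < T) (x : ℕ → ℝ → ℝ) (x₀ : ℝ → ℝ)
    (hx_cont : ∀ n, ContinuousOn (x n) (Set.Icc 0 T))
    (hx₀_cont : ContinuousOn x₀ (Set.Icc 0 T))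
    (hx_unif : TendstoUniformlyOn x x₀ atTop (Set.Icc 0 T))
    (v : ℕ → ℝ → ℝ) (v₀ : ℝ → ℝ)
    (hv_mono : ∀ n, Monotone (v n)) (hv₀_mono : Monotone v₀)
    (hv_cont : ∀ n, Continuous (v n)) (hv₀_cont : Continuous v₀)
    (hv_const : ∀ n, (∀ t ≤ (0:ℝ), v n t = v n 0) ∧ ∀ t ≥ T, v n t = v n T)
    (hv₀_const : (∀ t ≤ (0:ℝ), v₀ t = v₀ 0) ∧ ∀ t ≥ T, v₀ t = v₀ T)
    (hv_unif : TendstoUniformlyOn v v₀ atTop (Set.Icc 0 T)) :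
    TendstoUniformlyOn
      (fun n t => ∫ u in Set.Ioc 0 t, x n u ∂(lsMeasure (v n) (hv_mono n) (hv_cont n)))
      (fun t => ∫ u in Set.Ioc 0 t, x₀ u ∂(lsMeasure v₀ hv₀_mono hv₀_cont))
      atTop (Set.Icc 0 T) := by
  classical
  set μ₀ := lsMeasure v₀ hv₀_mono hv₀_cont with hμ₀
  haveI : IsLocallyFiniteMeasure μ₀ := lsMeasure_locFinite _ _ _
  have hIoc0 : ∀ a b : ℝ, μ₀ (Set.Ioc a b) = ENNReal.ofReal (v₀ b - v₀ a) :=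
    fun a b => lsMeasure_Ioc v₀ hv₀_mono hv₀_cont a b
  rw [Metric.tendstoUniformlyOn_iff]
  intro ε hε
  -- bound on x₀
  obtain ⟨C, hC⟩ := isCompact_Icc.exists_bound_of_continuousOn hx₀_cont
  have hC0 : 0 ≤ C := le_trans (norm_nonneg _) (hC 0 ⟨le_refl 0, hT.le⟩)
  obtain ⟨M, hM⟩ : ∃ M : ℝ, M = v₀ T - v₀ 0 := ⟨_, rfl⟩
  have hM0 : 0 ≤ M := by rw [hM]; exact sub_nonneg.2 (hv₀_mono hT.le)
  obtain ⟨δ, hδ⟩ : ∃ δ : ℝ, δ = ε / (6 * (M + 3)) := ⟨_, rfl⟩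
  have hδ0 : 0 < δ := by rw [hδ]; exact div_pos hε (by nlinarith)
  -- uniform continuity of x₀
  have huc := isCompact_Icc.uniformContinuousOn_of_continuous hx₀_cont
  rw [Metric.uniformContinuousOn_iff] at huc
  obtain ⟨δ', hδ'0, hδ'⟩ := huc δ hδ0
  -- choose the number of partition pieces
  obtain ⟨k, hk⟩ := exists_nat_gt (T / δ')
  have hk0 : 0 < (k : ℝ) := lt_trans (div_pos hT hδ'0) hk
  have hk0' : 0 < k := Nat.cast_pos.mp hk0
  have hTk : T / k < δ' := by
    rw [div_lt_iff₀ hk0]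
    have h := (div_lt_iff₀ hδ'0).mp hk
    linarith
  obtain ⟨η, hη⟩ : ∃ η : ℝ, η = min 1 (ε / (4 * k * (C + 1))) := ⟨_, rfl⟩
  have hη0 : 0 < η := by
    rw [hη]
    exact lt_min one_pos (div_pos hε (mul_pos (mul_pos (by norm_num) hk0) (by linarith)))
  have hεx := Metric.tendstoUniformlyOn_iff.mp hx_unif δ hδ0
  have hεv := Metric.tendstoUniformlyOn_iff.mp hv_unif η hη0
  filter_upwards [hεx, hεv] with n hxn hvn
  intro t ht
  obtain ⟨ht0, htT⟩ := ht
  set μn := lsMeasure (v n) (hv_mono n) (hv_cont n) with hμn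
  haveI : IsLocallyFiniteMeasure μn := lsMeasure_locFinite _ _ _
  have hIocn : ∀ a b : ℝ, μn (Set.Ioc a b) = ENNReal.ofReal (v n b - v n a) :=
    fun a b => lsMeasure_Ioc (v n) (hv_mono n) (hv_cont n) a b
  -- the partition
  set s : ℕ → ℝ := fun i => (i : ℝ) * T / k with hs
  set p : ℕ → ℝ := fun i => min (s i) t with hp
  have hsmono : Monotone s := by
    intro i j hij
    simp only [hs]
    gcongr
  have hpmono : Monotone p := fun i j hij => min_le_min (hsmono hij) le_rfl
  have hs0 : s 0 = 0 := by simp [hs]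
  have hsk : s k = T := by
    simp only [hs]; exact mul_div_cancel_left₀ T hk0.ne'
  have hp0 : p 0 = 0 := by simp [hp, hs0, ht0]
  have hpk : p k = t := by simp [hp, hsk, htT]
  have hsmem : ∀ i ≤ k, s i ∈ Set.Icc (0 : ℝ) T := by
    intro i hi
    constructor
    · simp only [hs]; positivity
    · have := hsmono hi; rwa [hsk] at this
  have hpmem : ∀ i, p i ∈ Set.Icc (0 : ℝ) T := by
    intro i
    constructor
    · exact le_min (by simp only [hs]; positivity) ht0
    · exact le_trans (min_le_right _ _) htT
  have hIocIcc : ∀ a b : ℝ, 0 ≤ a → b ≤ T → Set.Ioc a b ⊆ Set.Icc 0 T := by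
    intro a b ha hb
    exact Set.Ioc_subset_Icc_self.trans (Set.Icc_subset_Icc ha hb)
  -- integrability
  have hintx₀n : MeasureTheory.IntegrableOn x₀ (Set.Icc 0 T) μn :=
    hx₀_cont.integrableOn_compact isCompact_Icc
  have hintx₀ : MeasureTheory.IntegrableOn x₀ (Set.Icc 0 T) μ₀ :=
    hx₀_cont.integrableOn_compact isCompact_Icc
  have hintxn : MeasureTheory.IntegrableOn (x n) (Set.Icc 0 T) μn :=
    (hx_cont n).integrableOn_compact isCompact_Icc
  have hsub0t : Set.Ioc (0 : ℝ) t ⊆ Set.Icc 0 T := hIocIcc 0 t le_rfl htT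
  -- telescoping sums
  have hsum_n : ∑ i ∈ Finset.range k, ∫ u in Set.Ioc (p i) (p (i + 1)), x₀ u ∂μn
      = ∫ u in Set.Ioc 0 t, x₀ u ∂μn := by
    have h := sum_integral_Ioc x₀ μn p hpmono k
      (by rw [hp0, hpk]; exact hintx₀n.mono_set hsub0t)
    rwa [hp0, hpk] at h
  have hsum_0 : ∑ i ∈ Finset.range k, ∫ u in Set.Ioc (p i) (p (i + 1)), x₀ u ∂μ₀
      = ∫ u in Set.Ioc 0 t, x₀ u ∂μ₀ := by
    have h := sum_integral_Ioc x₀ μ₀ p hpmono k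
      (by rw [hp0, hpk]; exact hintx₀.mono_set hsub0t)
    rwa [hp0, hpk] at h
  -- per-piece bound
  have hbound : ∀ i ∈ Finset.range k,
      |(∫ u in Set.Ioc (p i) (p (i + 1)), x₀ u ∂μn)
        - ∫ u in Set.Ioc (p i) (p (i + 1)), x₀ u ∂μ₀|
      ≤ δ * (v n (p (i + 1)) - v n (p i)) + δ * (v₀ (p (i + 1)) - v₀ (p i))
        + 2 * C * η := by
    intro i hi
    rw [Finset.mem_range] at hi
    have hi1 : i + 1 ≤ k := hi
    have hsi : s i ∈ Set.Icc (0 : ℝ) T := hsmem i (le_of_lt hi)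
    have hsi1 : s (i + 1) ∈ Set.Icc (0 : ℝ) T := hsmem (i + 1) hi1
    have hpiple : p i ≤ p (i + 1) := hpmono (Nat.le_succ i)
    have hsubIcc : Set.Ioc (p i) (p (i + 1)) ⊆ Set.Icc 0 T :=
      hIocIcc _ _ (hpmem i).1 (hpmem (i + 1)).2
    have hsubs : Set.Ioc (p i) (p (i + 1)) ⊆ Set.Ioc (s i) (s (i + 1)) :=
      Ioc_min_subset _ _ _
    set c := x₀ (s i) with hc
    have hclose : ∀ u ∈ Set.Ioc (p i) (p (i + 1)), |x₀ u - c| ≤ δ := by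
      intro u hu
      have hu' := hsubs hu
      have huIcc : u ∈ Set.Icc (0 : ℝ) T := hsubIcc hu
      have hdist : dist u (s i) < δ' := by
        rw [Real.dist_eq, abs_of_pos (sub_pos.2 hu'.1)]
        have : s (i + 1) - s i = T / k := by
          simp only [hs]; push_cast; ring
        have h2 : u - s i ≤ T / k := by
          rw [← this]; linarith [hu'.2]
        exact lt_of_le_of_lt h2 hTk
      have := hδ' u huIcc (s i) hsi hdist
      rw [Real.dist_eq] at this
      exact this.le
    have e1 := piece_diff μn (v n) (hv_mono n) hIocn x₀ c (p i) (p (i + 1)) hpiple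
      (hintx₀n.mono_set hsubIcc) δ hclose
    have e2 := piece_diff μ₀ v₀ hv₀_mono hIoc0 x₀ c (p i) (p (i + 1)) hpiple
      (hintx₀.mono_set hsubIcc) δ hclose
    have e3 : |c * (v n (p (i + 1)) - v n (p i)) - c * (v₀ (p (i + 1)) - v₀ (p i))|
        ≤ 2 * C * η := by
      rw [← mul_sub, abs_mul]
      have hcC : |c| ≤ C := by
        have := hC (s i) hsi
        rwa [Real.norm_eq_abs] at this
      have hd : |(v n (p (i + 1)) - v n (p i)) - (v₀ (p (i + 1)) - v₀ (p i))| ≤ 2 * η := by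
        have h1 := hvn (p (i + 1)) (hpmem (i + 1))
        have h2 := hvn (p i) (hpmem i)
        rw [Real.dist_eq] at h1 h2
        have h1' : |v n (p (i + 1)) - v₀ (p (i + 1))| < η := by
          rwa [abs_sub_comm] at h1
        have h2' : |v n (p i) - v₀ (p i)| < η := by rwa [abs_sub_comm] at h2
        have heq : (v n (p (i + 1)) - v n (p i)) - (v₀ (p (i + 1)) - v₀ (p i))
            = (v n (p (i + 1)) - v₀ (p (i + 1))) - (v n (p i) - v₀ (p i)) := by ring
        rw [heq]
        calc |(v n (p (i + 1)) - v₀ (p (i + 1))) - (v n (p i) - v₀ (p i))|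
            ≤ |v n (p (i + 1)) - v₀ (p (i + 1))| + |v n (p i) - v₀ (p i)| :=
              abs_sub _ _
          _ ≤ 2 * η := by linarith
      calc |c| * |(v n (p (i + 1)) - v n (p i)) - (v₀ (p (i + 1)) - v₀ (p i))|
          ≤ C * (2 * η) := mul_le_mul hcC hd (abs_nonneg _) hC0
        _ = 2 * C * η := by ring
    have hsplit : (∫ u in Set.Ioc (p i) (p (i + 1)), x₀ u ∂μn)
        - ∫ u in Set.Ioc (p i) (p (i + 1)), x₀ u ∂μ₀
        = ((∫ u in Set.Ioc (p i) (p (i + 1)), x₀ u ∂μn)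
            - c * (v n (p (i + 1)) - v n (p i)))
          - ((∫ u in Set.Ioc (p i) (p (i + 1)), x₀ u ∂μ₀)
            - c * (v₀ (p (i + 1)) - v₀ (p i)))
          + (c * (v n (p (i + 1)) - v n (p i)) - c * (v₀ (p (i + 1)) - v₀ (p i))) := by
      ring
    rw [hsplit]
    calc |_ - _ + _|
        ≤ |((∫ u in Set.Ioc (p i) (p (i + 1)), x₀ u ∂μn)
            - c * (v n (p (i + 1)) - v n (p i)))
          - ((∫ u in Set.Ioc (p i) (p (i + 1)), x₀ u ∂μ₀)
            - c * (v₀ (p (i + 1)) - v₀ (p i)))|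
          + |c * (v n (p (i + 1)) - v n (p i)) - c * (v₀ (p (i + 1)) - v₀ (p i))| :=
          abs_add_le _ _
      _ ≤ (|(∫ u in Set.Ioc (p i) (p (i + 1)), x₀ u ∂μn)
            - c * (v n (p (i + 1)) - v n (p i))|
          + |(∫ u in Set.Ioc (p i) (p (i + 1)), x₀ u ∂μ₀)
            - c * (v₀ (p (i + 1)) - v₀ (p i))|)
          + |c * (v n (p (i + 1)) - v n (p i)) - c * (v₀ (p (i + 1)) - v₀ (p i))| := by
          gcongr
          exact abs_sub _ _
      _ ≤ δ * (v n (p (i + 1)) - v n (p i)) + δ * (v₀ (p (i + 1)) - v₀ (p i))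
          + 2 * C * η := by linarith
  -- the B term
  have hB : |(∫ u in Set.Ioc 0 t, x₀ u ∂μn) - ∫ u in Set.Ioc 0 t, x₀ u ∂μ₀|
      ≤ δ * (v n t - v n 0) + δ * (v₀ t - v₀ 0) + k * (2 * C * η) := by
    rw [← hsum_n, ← hsum_0, ← Finset.sum_sub_distrib]
    refine le_trans (Finset.abs_sum_le_sum_abs _ _) ?_
    refine le_trans (Finset.sum_le_sum hbound) ?_
    have hsum : ∑ i ∈ Finset.range k,
        (δ * (v n (p (i + 1)) - v n (p i)) + δ * (v₀ (p (i + 1)) - v₀ (p i)) + 2 * C * η)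
        = δ * (v n t - v n 0) + δ * (v₀ t - v₀ 0) + k * (2 * C * η) := by
      rw [Finset.sum_add_distrib, Finset.sum_add_distrib, ← Finset.mul_sum, ← Finset.mul_sum,
        Finset.sum_range_sub (fun i => v n (p i)), Finset.sum_range_sub (fun i => v₀ (p i)),
        Finset.sum_const, Finset.card_range, hp0, hpk, nsmul_eq_mul]
    rw [hsum]
  -- the A term
  have hA : |(∫ u in Set.Ioc 0 t, x n u ∂μn) - ∫ u in Set.Ioc 0 t, x₀ u ∂μn|
      ≤ δ * (v n t - v n 0) := by
    have heq : (∫ u in Set.Ioc 0 t, x n u ∂μn) - ∫ u in Set.Ioc 0 t, x₀ u ∂μn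
        = ∫ u in Set.Ioc 0 t, (x n u - x₀ u) ∂μn := by
      rw [integral_sub (hintxn.mono_set hsub0t) (hintx₀n.mono_set hsub0t)]
    rw [heq]
    refine piece_est μn (v n) (hv_mono n) hIocn _ 0 t ht0
      ((hintxn.mono_set hsub0t).sub (hintx₀n.mono_set hsub0t)) δ ?_
    intro u hu
    have h := hxn u (hsub0t hu)
    rw [Real.dist_eq] at h
    show |x n u - x₀ u| ≤ δ
    rw [abs_sub_comm]
    exact h.le
  -- bounds on the variations
  have hvnt : v n t - v n 0 ≤ M + 2 * η := by
    have h1 := hvn T ⟨hT.le, le_rfl⟩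
    have h2 := hvn 0 ⟨le_rfl, hT.le⟩
    rw [Real.dist_eq] at h1 h2
    have h3 : v n t ≤ v n T := hv_mono n htT
    have h4 : |v₀ T - v n T| < η := h1
    have h5 : |v₀ 0 - v n 0| < η := h2
    rw [abs_lt] at h4 h5
    rw [hM]
    linarith
  have hvnt0 : 0 ≤ v n t - v n 0 := sub_nonneg.2 (hv_mono n ht0)
  have hv0t : v₀ t - v₀ 0 ≤ M := by
    have : v₀ t ≤ v₀ T := hv₀_mono htT
    rw [hM]; linarith
  have hv0t0 : 0 ≤ v₀ t - v₀ 0 := sub_nonneg.2 (hv₀_mono ht0)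
  have hη1 : η ≤ 1 := by rw [hη]; exact min_le_left _ _
  have hη2 : η ≤ ε / (4 * k * (C + 1)) := by rw [hη]; exact min_le_right _ _
  -- numeric conclusion
  rw [Real.dist_eq]
  have htri := abs_sub_le (∫ u in Set.Ioc 0 t, x₀ u ∂μ₀)
    (∫ u in Set.Ioc 0 t, x₀ u ∂μn) (∫ u in Set.Ioc 0 t, x n u ∂μn)
  rw [abs_sub_comm (∫ u in Set.Ioc 0 t, x₀ u ∂μ₀) (∫ u in Set.Ioc 0 t, x₀ u ∂μn),
    abs_sub_comm (∫ u in Set.Ioc 0 t, x₀ u ∂μn) (∫ u in Set.Ioc 0 t, x n u ∂μn)] at htri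
  have hδ2 : δ * (3 * M + 9) = ε / 2 := by
    rw [hδ]; field_simp; ring
  have hkC : (k : ℝ) * (2 * C * η) < ε / 2 := by
    have h1 : (k : ℝ) * (2 * C * η) ≤ (k : ℝ) * (2 * C * (ε / (4 * k * (C + 1)))) := by
      have h := mul_le_mul_of_nonneg_left hη2 (by linarith : (0:ℝ) ≤ 2 * C)
      exact mul_le_mul_of_nonneg_left h hk0.le
    have h2 : (k : ℝ) * (2 * C * (ε / (4 * k * (C + 1)))) = ε * C / (2 * (C + 1)) := by
      field_simp
      ring
    have h3 : ε * C / (2 * (C + 1)) < ε / 2 := by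
      rw [div_lt_div_iff₀ (by linarith) (by norm_num)]
      nlinarith
    linarith
  have hb1 : δ * (v n t - v n 0) ≤ δ * (M + 2) :=
    mul_le_mul_of_nonneg_left (by linarith) hδ0.le
  have hb2 : δ * (v₀ t - v₀ 0) ≤ δ * M := mul_le_mul_of_nonneg_left hv0t hδ0.le
  have hb3 : δ * (M + 2) + δ * (M + 2) + δ * M ≤ ε / 2 := by nlinarith [hδ0.le, hδ2]
  linarith [htri, hA, hB, hb1, hb2, hb3, hkC]
end
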